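/- Hole cancellation: let G be a smooth domain in the triangular lattice X and let W be a hole of G, i.e. a bounded simply connected smooth domain whose interior is a connected component of the complement of G and which shares a common part of the boundary with G. Then for every common boundary point p of G and W one has |S₁(p) ∩ W| + |S₁(p) ∩ G| = 6 and |S₂(p) ∩ W| + |S₂(p) ∩ G| = 12, and consequently the curvatures cancel: K_W(p) + K_G(p) = 0. -/

import Mathlib

/-!
Common framework: subgraphs of an ambient simple graph are modelled as vertex sets
with the induced graph structure (this captures condition (iv): domains are induced
subgraphs). Spheres, curvature, interior/boundary points, domains, smooth domains,
simple connectivity, Euler characteristic, and the triangular lattice `tri`.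
-/

namespace TriGB

variable {V : Type*}

/-- The subgraph of `G` induced on the vertex set `T`, as a graph on the ambient
vertex type (vertices outside `T` are isolated). -/
def restrict (G : SimpleGraph V) (T : Set V) : SimpleGraph V where
  Adj a b := a ∈ T ∧ b ∈ T ∧ G.Adj a b
  symm := ⟨fun _ _ ⟨ha, hb, h⟩ => ⟨hb, ha, h.symm⟩⟩
  loopless := ⟨fun a ⟨_, _, h⟩ => G.loopless.irrefl a h⟩

/-- The neighbours of `p` lying inside `T` (the vertex set of the unit sphere of `p`
in the subgraph induced on `T`, for `p ∈ T`). -/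
def nbrs (G : SimpleGraph V) (T : Set V) (p : V) : Set V := {q | q ∈ T ∧ G.Adj p q}

/-- The vertex set of the sphere of radius `r` around `p` in the subgraph induced on `T`:
points of `T` at graph distance `r` from `p` within that subgraph. -/
def sphVerts (G : SimpleGraph V) (T : Set V) (p : V) (r : ℕ) : Set V :=
  {q | q ∈ T ∧ (restrict G T).Reachable p q ∧ (restrict G T).dist p q = r}

/-- The vertex set of the ball of radius `r` around `p` in the subgraph induced on `T`. -/
def ballVerts (G : SimpleGraph V) (T : Set V) (p : V) (r : ℕ) : Set V :=
  {q | q ∈ T ∧ (restrict G T).Reachable p q ∧ (restrict G T).dist p q ≤ r}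

/-- The edges of the sphere of radius `r` around `p`: edges of the (induced) subgraph
joining two vertices at distance `r` from `p`. -/
def sphEdges (G : SimpleGraph V) (T : Set V) (p : V) (r : ℕ) : Set (Sym2 V) :=
  {e | ∃ a b, e = s(a, b) ∧ a ∈ sphVerts G T p r ∧ b ∈ sphVerts G T p r ∧ G.Adj a b}

/-- The arc length `|S_r(p)|`: the number of edges of the sphere of radius `r`. -/
noncomputable def arcLen (G : SimpleGraph V) (T : Set V) (p : V) (r : ℕ) : ℕ :=
  (sphEdges G T p r).ncard

/-- The (second order Puiseux) curvature `K(p) = 2|S₁(p)| - |S₂(p)|`. -/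
noncomputable def curv (G : SimpleGraph V) (T : Set V) (p : V) : ℤ :=
  2 * (arcLen G T p 1 : ℤ) - (arcLen G T p 2 : ℤ)

/-- `p` is an interior point of `T`: its unit sphere within `T` coincides with its
unit sphere in the ambient graph (all neighbours, with all edges between them,
lie in `T`; in the induced model this means all ambient neighbours belong to `T`). -/
def IsInteriorPt (G : SimpleGraph V) (T : Set V) (p : V) : Prop :=
  p ∈ T ∧ ∀ q, G.Adj p q → q ∈ T

/-- `p` is a boundary point of `T`: a non-interior point of `T` adjacent to an
interior point. -/
def IsBoundaryPt (G : SimpleGraph V) (T : Set V) (p : V) : Prop :=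
  p ∈ T ∧ ¬ IsInteriorPt G T p ∧ ∃ q, G.Adj p q ∧ IsInteriorPt G T q

/-- The set of interior points of `T`. -/
def interiorSet (G : SimpleGraph V) (T : Set V) : Set V := {p | IsInteriorPt G T p}

/-- The set of boundary points of `T`. -/
def boundarySet (G : SimpleGraph V) (T : Set V) : Set V := {p | IsBoundaryPt G T p}

/-- `T` is a one-dimensional graph: every vertex of `T` has a nonempty and edgeless
unit sphere within `T`. -/
def OneDimSet (G : SimpleGraph V) (T : Set V) : Prop :=
  ∀ p ∈ T, (nbrs G T p).Nonempty ∧ ∀ q ∈ nbrs G T p, ∀ r ∈ nbrs G T p, ¬ G.Adj q r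

/-- `p` is a two-dimensional point of `T`: its unit sphere within `T` is a
one-dimensional graph. -/
def TwoDimPt (G : SimpleGraph V) (T : Set V) (p : V) : Prop :=
  OneDimSet G (nbrs G T p)

/-- A domain: (i) two-dimensional, (ii) every vertex interior or boundary,
(iii) the boundary points form a one-dimensional graph, (iv) induced (built into
the model), (v) interior points sharing a common boundary point are adjacent or
both adjacent to a third interior point. -/
def IsDomain (G : SimpleGraph V) (T : Set V) : Prop :=
  (∀ p ∈ T, TwoDimPt G T p) ∧
  (∀ p ∈ T, IsInteriorPt G T p ∨ IsBoundaryPt G T p) ∧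
  OneDimSet G (boundarySet G T) ∧
  (∀ p q, IsInteriorPt G T p → IsInteriorPt G T q → p ≠ q →
    (∃ b, IsBoundaryPt G T b ∧ G.Adj p b ∧ G.Adj q b) →
    (G.Adj p q ∨ ∃ r, IsInteriorPt G T r ∧ r ≠ p ∧ r ≠ q ∧ G.Adj p r ∧ G.Adj q r))

/-- A smooth domain: a domain whose complement is also a domain. -/
def IsSmoothDomain (G : SimpleGraph V) (T : Set V) : Prop :=
  IsDomain G T ∧ IsDomain G Tᶜ

/-- A closed loop in `T`: a cyclic sequence of points of `T` such that consecutive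
points are equal or adjacent (curves are loops; trivial loops are constant). -/
def IsLoopIn (G : SimpleGraph V) (T : Set V) {n : ℕ} (x : Fin (n + 1) → V) : Prop :=
  (∀ i, x i ∈ T) ∧ ∀ i, x i = x (i + 1) ∨ G.Adj (x i) (x (i + 1))

/-- An elementary deformation step between loops in `T`: exactly one point moves,
by distance `1`. -/
def LoopStep (G : SimpleGraph V) (T : Set V) {n : ℕ} (x y : Fin (n + 1) → V) : Prop :=
  IsLoopIn G T x ∧ IsLoopIn G T y ∧ ∃ j, G.Adj (x j) (y j) ∧ ∀ i, i ≠ j → x i = y i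

/-- `T` is simply connected: every closed loop of interior points can be deformed,
by finitely many elementary steps within the interior, to a trivial (constant) loop. -/
def SimplyConnected (G : SimpleGraph V) (T : Set V) : Prop :=
  ∀ (n : ℕ) (x : Fin (n + 1) → V), IsLoopIn G (interiorSet G T) x →
    ∃ c : V, Relation.ReflTransGen (LoopStep G (interiorSet G T)) x (fun _ => c)

/-- The edges of the subgraph induced on `T`. -/
def edgesOf (G : SimpleGraph V) (T : Set V) : Set (Sym2 V) :=
  {e | ∃ a b, e = s(a, b) ∧ a ∈ T ∧ b ∈ T ∧ G.Adj a b}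

/-- The (triangular) faces of the subgraph induced on `T`: triples of mutually
adjacent vertices of `T`. -/
def facesOf (G : SimpleGraph V) (T : Set V) : Set (Finset V) :=
  {t | t.card = 3 ∧ ↑t ⊆ T ∧ ∀ a ∈ t, ∀ b ∈ t, a ≠ b → G.Adj a b}

/-- The Euler characteristic `χ = v - e + f`. -/
noncomputable def euler (G : SimpleGraph V) (T : Set V) : ℤ :=
  (T.ncard : ℤ) - ((edgesOf G T).ncard : ℤ) + ((facesOf G T).ncard : ℤ)

/-- The total boundary curvature of a domain. -/
noncomputable def totalCurv (G : SimpleGraph V) (T : Set V) : ℤ :=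
  ∑ᶠ p ∈ boundarySet G T, curv G T p

/-- The ball of radius 1 around `q` in the ambient graph. -/
def ball1 (G : SimpleGraph V) (q : V) : Set V := insert q (G.neighborSet q)

/-- `T` is a cycle (a simple closed one-dimensional graph): nonempty, one-dimensional,
connected, and every vertex has exactly two neighbours within `T`. -/
def IsCycleSet (G : SimpleGraph V) (T : Set V) : Prop :=
  T.Nonempty ∧ OneDimSet G T ∧ (∀ a ∈ T, ∀ b ∈ T, (restrict G T).Reachable a b) ∧
  ∀ q ∈ T, (nbrs G T q).ncard = 2

/-- For a general graph: the number of edges of the unit sphere of `g` (the subgraph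
induced on the neighbours of `g`). -/
noncomputable def sphereEdgeCount (G : SimpleGraph V) (g : V) : ℕ :=
  (edgesOf G (G.neighborSet g)).ncard

/-- The boundary points of a general graph: vertices whose unit sphere is
one-dimensional but not closed (not a cycle). -/
def boundaryVerts (G : SimpleGraph V) : Set V :=
  {g | OneDimSet G (G.neighborSet g) ∧ ¬ IsCycleSet G (G.neighborSet g)}

open Classical in
/-- The combinatorial Puiseux curvature: `6 - |S₁(g)|` at interior points (unit sphere
a cycle) and `3 - |S₁(g)|` at boundary points. -/
noncomputable def K1 (G : SimpleGraph V) (g : V) : ℤ :=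
  if IsCycleSet G (G.neighborSet g) then 6 - (sphereEdgeCount G g : ℤ)
  else 3 - (sphereEdgeCount G g : ℤ)

/-- `A` is a connected component of the subgraph induced on `U`. -/
def IsComponentOf (G : SimpleGraph V) (A U : Set V) : Prop :=
  A.Nonempty ∧ A ⊆ U ∧ (∀ a ∈ A, ∀ b ∈ A, (restrict G A).Reachable a b) ∧
  ∀ a ∈ A, ∀ b ∈ U, G.Adj a b → b ∈ A

/-- The six unit directions of the triangular lattice. -/
def hexDirs : Set (ℤ × ℤ) := {(1, 0), (-1, 0), (0, 1), (0, -1), (1, -1), (-1, 1)}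

lemma neg_mem_hexDirs {d : ℤ × ℤ} (hd : d ∈ hexDirs) : -d ∈ hexDirs := by
  simp only [hexDirs, Set.mem_insert_iff, Set.mem_singleton_iff] at hd ⊢
  rcases hd with rfl | rfl | rfl | rfl | rfl | rfl <;> simp [Prod.ext_iff]

/-- The triangular lattice: the graph on `ℤ²` in which `(k,l)` is adjacent to
`(k±1,l)`, `(k,l±1)`, `(k+1,l-1)`, `(k-1,l+1)`. -/
def tri : SimpleGraph (ℤ × ℤ) where
  Adj p q := p - q ∈ hexDirs
  symm := by
    constructor
    intro p q h
    show q - p ∈ hexDirs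
    rw [show q - p = -(p - q) by ring]
    exact neg_mem_hexDirs h
  loopless := by
    constructor
    intro p h
    simp only [sub_self, hexDirs, Set.mem_insert_iff, Set.mem_singleton_iff] at h
    rcases h with h | h | h | h | h | h <;> simp [Prod.ext_iff] at h


/-- `W` is a hole of `T`: a bounded (finite) simply connected smooth domain whose
interior is a connected component of the complement of `T`, sharing a common part
of the boundary with `T`. -/
def IsHole (G : SimpleGraph V) (T W : Set V) : Prop :=
  W.Finite ∧ IsSmoothDomain G W ∧ SimplyConnected G W ∧
  IsComponentOf G (interiorSet G W) Tᶜ ∧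
  (boundarySet G T ∩ boundarySet G W).Nonempty

/-! ### Auxiliary infrastructure for the proof -/

/-- The six unit directions in cyclic (counterclockwise) order. -/
def dirv : Fin 6 → ℤ × ℤ := ![(1,0),(0,1),(-1,1),(-1,0),(0,-1),(1,-1)]

def dir (k : ZMod 6) : ℤ × ℤ := dirv k

lemma mem_hexDirs_iff (x : ℤ × ℤ) : x ∈ hexDirs ↔ ∃ k : ZMod 6, x = dir k := by
  constructor
  · intro h
    simp only [hexDirs, Set.mem_insert_iff, Set.mem_singleton_iff] at h
    rcases h with rfl | rfl | rfl | rfl | rfl | rfl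
    exacts [⟨0, rfl⟩, ⟨3, rfl⟩, ⟨1, rfl⟩, ⟨4, rfl⟩, ⟨5, rfl⟩, ⟨2, rfl⟩]
  · rintro ⟨k, rfl⟩
    revert k
    simp only [hexDirs, Set.mem_insert_iff, Set.mem_singleton_iff]
    decide

lemma tri_adj_iff (x y : ℤ × ℤ) : tri.Adj x y ↔ ∃ k : ZMod 6, y = x + dir k := by
  show x - y ∈ hexDirs ↔ _
  rw [mem_hexDirs_iff]
  constructor
  · rintro ⟨k, hk⟩
    refine ⟨k + 3, ?_⟩
    have h3 : ∀ k : ZMod 6, dir (k + 3) = - dir k := by decide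
    rw [h3]
    have : y = x - dir k := by rw [← hk]; ring
    rw [this]; ring
  · rintro ⟨k, rfl⟩
    refine ⟨k + 3, ?_⟩
    have h3 : ∀ k : ZMod 6, dir (k + 3) = - dir k := by decide
    rw [h3]; ring

lemma adj_add_dir (q : ℤ × ℤ) (k : ZMod 6) : tri.Adj q (q + dir k) := by
  rw [tri_adj_iff]; exact ⟨k, rfl⟩

lemma adj_dir_dir (q : ℤ × ℤ) (i j : ZMod 6) :
    tri.Adj (q + dir i) (q + dir j) ↔ (j = i + 1 ∨ j = i - 1) := by
  show (q + dir i) - (q + dir j) ∈ hexDirs ↔ _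
  have : (q + dir i) - (q + dir j) = dir i - dir j := by ring
  rw [this, mem_hexDirs_iff]
  clear this
  revert i j; decide

/-- offset adjacency: `q + u` adjacent to `q + v` iff `u - v ∈ hexDirs`. -/
lemma adj_offset (q u v : ℤ × ℤ) : tri.Adj (q + u) (q + v) ↔ u - v ∈ hexDirs := by
  show (q + u) - (q + v) ∈ hexDirs ↔ _
  have : (q + u) - (q + v) = u - v := by ring
  rw [this]

/-- The window of length `a` starting at `s`. -/
def win (s : ZMod 6) (a : ℕ) (k : ZMod 6) : Prop := (k - s).val < a

instance (s a k) : Decidable (win s a k) := by unfold win; infer_instance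

section GraphLemmas

variable {V : Type*} {G : SimpleGraph V} {T : Set V} {p x : V}

lemma restrict_adj_iff {a b : V} : (restrict G T).Adj a b ↔ a ∈ T ∧ b ∈ T ∧ G.Adj a b :=
  Iff.rfl

lemma mem_sphVerts_one (hp : p ∈ T) :
    x ∈ sphVerts G T p 1 ↔ x ∈ T ∧ G.Adj p x := by
  constructor
  · rintro ⟨hxT, hr, hd⟩
    exact ⟨hxT, ((SimpleGraph.dist_eq_one_iff_adj).1 hd).2.2⟩
  · rintro ⟨hxT, hadj⟩
    have ha : (restrict G T).Adj p x := ⟨hp, hxT, hadj⟩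
    exact ⟨hxT, ha.reachable, (SimpleGraph.dist_eq_one_iff_adj).2 ha⟩

lemma mem_sphVerts_two (hp : p ∈ T) :
    x ∈ sphVerts G T p 2 ↔
      x ∈ T ∧ x ≠ p ∧ ¬ G.Adj p x ∧ ∃ m, m ∈ T ∧ G.Adj p m ∧ G.Adj m x := by
  constructor
  · rintro ⟨hxT, hr, hd⟩
    have hne : x ≠ p := by
      rintro rfl
      rw [SimpleGraph.dist_self] at hd; omega
    have hnadj : ¬ (restrict G T).Adj p x := by
      intro h
      have := (SimpleGraph.dist_eq_one_iff_adj).2 h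
      omega
    obtain ⟨w, hw⟩ := hr.exists_walk_length_eq_dist
    rw [hd] at hw
    cases w with
    | nil => simp at hw
    | cons h1 w' =>
      cases w' with
      | nil => simp at hw
      | cons h2 w'' =>
        cases w'' with
        | nil =>
          exact ⟨hxT, hne, fun hc => hnadj ⟨hp, hxT, hc⟩,
            _, h1.2.1, h1.2.2, h2.2.2⟩
        | cons h3 w''' => simp [SimpleGraph.Walk.length_cons] at hw
  · rintro ⟨hxT, hne, hnadj, m, hmT, h1, h2⟩
    have ha1 : (restrict G T).Adj p m := ⟨hp, hmT, h1⟩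
    have ha2 : (restrict G T).Adj m x := ⟨hmT, hxT, h2⟩
    have hr : (restrict G T).Reachable p x := ⟨(ha1.toWalk.append ha2.toWalk)⟩
    refine ⟨hxT, hr, ?_⟩
    have hle : (restrict G T).dist p x ≤ 2 := by
      have := SimpleGraph.dist_le (ha1.toWalk.append ha2.toWalk)
      simpa using this
    have h0 : (restrict G T).dist p x ≠ 0 := by
      intro h
      exact hne (((SimpleGraph.Reachable.dist_eq_zero_iff hr).1 h)).symm
    have hone : (restrict G T).dist p x ≠ 1 := by
      intro h
      exact hnadj ((SimpleGraph.dist_eq_one_iff_adj).1 h).2.2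
    omega

end GraphLemmas

section DomainBasics

lemma zmod6_cases : ∀ z : ZMod 6, z = 0 ∨ z = 1 ∨ z = 2 ∨ z = 3 ∨ z = 4 ∨ z = 5 := by
  decide

lemma wincalc (s : ZMod 6) (a : ℕ) (c : ZMod 6) : win s a (s + c) ↔ c.val < a := by
  unfold win
  rw [show s + c - s = c by ring]

lemma notwin_iff (s : ZMod 6) (a : ℕ) (c : ZMod 6) : ¬ win s a (s + c) ↔ a ≤ c.val := by
  rw [wincalc]; omega

lemma val0 : (0 : ZMod 6).val = 0 := rfl
lemma val1 : (1 : ZMod 6).val = 1 := rfl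
lemma val2 : (2 : ZMod 6).val = 2 := rfl
lemma val3 : (3 : ZMod 6).val = 3 := rfl
lemma val4 : (4 : ZMod 6).val = 4 := rfl
lemma val5 : (5 : ZMod 6).val = 5 := rfl

lemma bdry_of_not_int {T : Set (ℤ × ℤ)} (hT : IsDomain tri T) {x : ℤ × ℤ} (hx : x ∈ T)
    (h : ¬ IsInteriorPt tri T x) : IsBoundaryPt tri T x :=
  (hT.2.1 x hx).resolve_left h

lemma intW_sub {T W : Set (ℤ × ℤ)} (hW : IsHole tri T W) :
    interiorSet tri W ⊆ Tᶜ := hW.2.2.2.1.2.1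

lemma intT_notW {T W : Set (ℤ × ℤ)} (hW : IsHole tri T W) {x : ℤ × ℤ}
    (hx : IsInteriorPt tri T x) : x ∉ W := by
  intro hxW
  rcases hW.2.1.1.2.1 x hxW with hint | hbd
  · exact intW_sub hW hint hx.1
  · obtain ⟨-, -, y, hy, hyint⟩ := hbd
    exact intW_sub hW hyint (hx.2 y hy)

lemma common_nbr_interior {T : Set (ℤ × ℤ)} (hT : IsDomain tri T) {x y z : ℤ × ℤ}
    (hx : IsBoundaryPt tri T x) (hy : IsBoundaryPt tri T y) (hxy : tri.Adj x y)
    (hz : z ∈ T) (h1 : tri.Adj x z) (h2 : tri.Adj y z) : IsInteriorPt tri T z := by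
  by_contra h
  have hzb : IsBoundaryPt tri T z := bdry_of_not_int hT hz h
  obtain ⟨-, hind⟩ := hT.2.2.1 x hx
  exact hind y ⟨hy, hxy⟩ z ⟨hzb, h1⟩ h2

lemma arc_classify (m : ZMod 6 → Bool)
    (h1 : ∃ k, m k = true) (h2 : ∃ k, m k = false)
    (h3 : ∀ k, m k = true → m (k + 1) = true ∨ m (k - 1) = true)
    (h4 : ∀ k, ¬(m k = true ∧ m (k + 1) = true ∧ m (k - 1) = false ∧ m (k + 2) = false)) :
    ∃ s : ZMod 6,
      (∀ k, m k = true ↔ win s 3 k) ∨ (∀ k, m k = true ↔ win s 4 k) ∨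
      (∀ k, m k = true ↔ win s 5 k) := by
  revert h1 h2 h3 h4
  revert m
  decide

lemma dir_inj : ∀ i j : ZMod 6, dir i = dir j → i = j := by decide

lemma dir_ne_zero : ∀ i : ZMod 6, dir i ≠ 0 := by decide

lemma val_succ : ∀ c : ZMod 6, c.val < 5 → (c + 1).val = c.val + 1 := by decide

/-- adjacency between `q + dir s` and `q + dir (s + c)` for `c = ±1`. -/
lemma adj_s_c (q : ℤ × ℤ) (s c : ZMod 6) (h : c = 1 ∨ c = 5) :
    tri.Adj (q + dir s) (q + dir (s + c)) := by
  apply (adj_dir_dir q s (s + c)).2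
  rcases h with rfl | rfl
  · left; rfl
  · right; rw [show (5 : ZMod 6) = -1 by decide]; ring

/-- adjacency between positions `s + c` and `s + c'` when they are consecutive. -/
lemma adj_pat (q : ℤ × ℤ) (s c c' : ZMod 6) (h : c = c' + 1 ∨ c' = c + 1) :
    tri.Adj (q + dir (s + c)) (q + dir (s + c')) := by
  apply (adj_dir_dir q (s + c) (s + c')).2
  rcases h with rfl | rfl
  · right; ring
  · left; ring

lemma not_adj_pat (q : ℤ × ℤ) (s c c' : ZMod 6) (h1 : c' ≠ c + 1) (h2 : c ≠ c' + 1) :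
    ¬ tri.Adj (q + dir (s + c)) (q + dir (s + c')) := by
  intro h
  rcases (adj_dir_dir q (s + c) (s + c')).1 h with he | he
  · exact h1 (add_left_cancel (he.trans (by ring : (s + c) + 1 = s + (c + 1))))
  · have : c' = c - 1 := add_left_cancel (he.trans (by ring : (s + c) - 1 = s + (c - 1)))
    exact h2 (by rw [this]; ring)

lemma point_inj (q : ℤ × ℤ) (s c c' : ZMod 6) (h : q + dir (s + c) = q + dir (s + c')) :
    c = c' :=
  add_left_cancel (dir_inj _ _ (add_left_cancel h))

lemma point_ne (q : ℤ × ℤ) (s c c' : ZMod 6) (h : c ≠ c') :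
    q + dir (s + c) ≠ q + dir (s + c') := fun hc => h (point_inj q s c c' hc)

lemma point_ne_base (q : ℤ × ℤ) (i : ZMod 6) : q + dir i ≠ q := by
  intro h
  exact dir_ne_zero i (by simpa using h)

/-- the common neighbours of `a_{s+1}` and `a_{s+3}` are `q` and `a_{s+2}`. -/
lemma mid_char : ∀ s t u : ZMod 6, dir (s + 1) + dir t = dir (s + 3) + dir u →
    dir (s + 1) + dir t = 0 ∨ dir (s + 1) + dir t = dir (s + 2) := by decide

end DomainBasics

section Ring1

variable {T W : Set (ℤ × ℤ)} {q : ℤ × ℤ}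

/-- All hexagon positions of `q` in the complement of the `T`-window are interior
points of the hole `W`. -/
lemma complement_interiorW (hW : IsHole tri T W) (hqW : IsBoundaryPt tri W q)
    (s : ZMod 6) (a : ℕ) (ha : a = 3 ∨ a = 4 ∨ a = 5)
    (hwin : ∀ k, q + dir k ∈ T ↔ win s a k) :
    ∀ k, ¬ win s a k → IsInteriorPt tri W (q + dir k) := by
  have ha3 : 3 ≤ a := by rcases ha with rfl | rfl | rfl <;> omega
  have ha5 : a ≤ 5 := by rcases ha with rfl | rfl | rfl <;> omega
  obtain ⟨hqWm, hqWni, y₀, hy₀adj, hy₀int⟩ := hqW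
  obtain ⟨k₀, rfl⟩ := (tri_adj_iff q y₀).1 hy₀adj
  have hk₀ : ¬ win s a k₀ := fun hc => intW_sub hW hy₀int ((hwin k₀).2 hc)
  have step : ∀ k k' : ZMod 6, ¬ win s a k' → tri.Adj (q + dir k) (q + dir k') →
      IsInteriorPt tri W (q + dir k) → IsInteriorPt tri W (q + dir k') := by
    intro k k' hk' hadj hint
    have hcm : q + dir k' ∈ Tᶜ := fun hc => hk' ((hwin k').1 hc)
    exact hW.2.2.2.1.2.2.2 _ hint _ hcm hadj
  have hup : ∀ c : ZMod 6, a ≤ (c + 1).val →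
      IsInteriorPt tri W (q + dir (s + c)) → IsInteriorPt tri W (q + dir (s + (c + 1))) := by
    intro c hc h
    exact step _ _ ((notwin_iff s a (c + 1)).2 hc) (adj_pat q s c (c + 1) (Or.inr rfl)) h
  have hdn : ∀ c : ZMod 6, a ≤ c.val →
      IsInteriorPt tri W (q + dir (s + (c + 1))) → IsInteriorPt tri W (q + dir (s + c)) := by
    intro c hc h
    exact step _ _ ((notwin_iff s a c).2 hc) (adj_pat q s (c + 1) c (Or.inl rfl)) h
  obtain ⟨c₀, rfl⟩ : ∃ c, k₀ = s + c := ⟨k₀ - s, by ring⟩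
  have hc₀ : a ≤ c₀.val := (notwin_iff s a c₀).1 hk₀
  have h05 : IsInteriorPt tri W (q + dir (s + 5)) := by
    rcases zmod6_cases c₀ with rfl | rfl | rfl | rfl | rfl | rfl
    · rw [val0] at hc₀; omega
    · rw [val1] at hc₀; omega
    · rw [val2] at hc₀; omega
    · have h4 := hup 3 (by rw [show (3 : ZMod 6) + 1 = 4 by decide, val4]; rw [val3] at hc₀; omega)
        hy₀int
      rw [show (3 : ZMod 6) + 1 = 4 by decide] at h4
      have h5 := hup 4 (by rw [show (4 : ZMod 6) + 1 = 5 by decide, val5]; omega) h4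
      rwa [show (4 : ZMod 6) + 1 = 5 by decide] at h5
    · have h5 := hup 4 (by rw [show (4 : ZMod 6) + 1 = 5 by decide, val5]; omega) hy₀int
      rwa [show (4 : ZMod 6) + 1 = 5 by decide] at h5
    · exact hy₀int
  intro k hk
  obtain ⟨c, rfl⟩ : ∃ c, k = s + c := ⟨k - s, by ring⟩
  have hc : a ≤ c.val := (notwin_iff s a c).1 hk
  rcases zmod6_cases c with rfl | rfl | rfl | rfl | rfl | rfl
  · rw [val0] at hc; omega
  · rw [val1] at hc; omega
  · rw [val2] at hc; omega
  · rw [val3] at hc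
    have h4 := hdn 4 (by rw [val4]; omega)
      (by rwa [show (4 : ZMod 6) + 1 = 5 by decide])
    exact hdn 3 (by rw [val3]; omega) (by rwa [show (3 : ZMod 6) + 1 = 4 by decide])
  · rw [val4] at hc
    exact hdn 4 (by rw [val4]; omega) (by rwa [show (4 : ZMod 6) + 1 = 5 by decide])
  · exact h05

/-- Non-endpoint window positions are interior points of `T`. -/
lemma window_interiorT (hT : IsSmoothDomain tri T) (hqTb : IsBoundaryPt tri T q)
    (s : ZMod 6) (a : ℕ) (ha : a = 3 ∨ a = 4 ∨ a = 5)
    (hwin : ∀ k, q + dir k ∈ T ↔ win s a k) :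
    ∀ k, win s a k → k ≠ s → k ≠ s + ((a - 1 : ℕ) : ZMod 6) →
      IsInteriorPt tri T (q + dir k) := by
  have ha3 : 3 ≤ a := by rcases ha with rfl | rfl | rfl <;> omega
  have ha5 : a ≤ 5 := by rcases ha with rfl | rfl | rfl <;> omega
  have hwin0 : win s a s := by
    unfold win; rw [sub_self, val0]; omega
  have hbds : IsBoundaryPt tri T (q + dir s) := by
    refine bdry_of_not_int hT.1 ((hwin s).2 hwin0) ?_
    rintro ⟨-, hall⟩
    have h5T : q + dir (s + 5) ∈ T := hall _ (adj_s_c q s 5 (Or.inr rfl))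
    have := (hwin _).1 h5T
    rw [wincalc, val5] at this; omega
  have hbdj : IsBoundaryPt tri T (q + dir (s + ((a - 1 : ℕ) : ZMod 6))) := by
    refine bdry_of_not_int hT.1 ((hwin _).2 ?_) ?_
    · rw [wincalc]; rcases ha with rfl | rfl | rfl <;> decide
    · rintro ⟨-, hall⟩
      have hT' : q + dir (s + (((a - 1 : ℕ) : ZMod 6) + 1)) ∈ T :=
        hall _ (adj_pat q s _ _ (Or.inr rfl))
      have := (hwin _).1 hT'
      rw [wincalc] at this
      rcases ha with rfl | rfl | rfl <;> revert this <;> decide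
  have hint1 : IsInteriorPt tri T (q + dir (s + 1)) := by
    refine common_nbr_interior hT.1 hqTb hbds (adj_add_dir q s)
      ((hwin _).2 (by rw [wincalc, val1]; omega)) (adj_add_dir q (s + 1))
      (adj_s_c q s 1 (Or.inl rfl))
  have hintm : IsInteriorPt tri T (q + dir (s + ((a - 2 : ℕ) : ZMod 6))) := by
    refine common_nbr_interior hT.1 hqTb hbdj (adj_add_dir q _)
      ((hwin _).2 (by rw [wincalc]; rcases ha with rfl | rfl | rfl <;> decide))
      (adj_add_dir q _) (adj_pat q s _ _ (Or.inl ?_))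
    rcases ha with rfl | rfl | rfl <;> decide
  intro k hk hks hkj
  obtain ⟨c, rfl⟩ : ∃ c, k = s + c := ⟨k - s, by ring⟩
  have hc : c.val < a := (wincalc s a c).1 hk
  have hc0 : c ≠ 0 := fun h => hks (by rw [h, add_zero])
  have hcj : c ≠ ((a - 1 : ℕ) : ZMod 6) := fun h => hkj (by rw [h])
  rcases zmod6_cases c with rfl | rfl | rfl | rfl | rfl | rfl
  · exact absurd rfl hc0
  · exact hint1
  · rcases ha with rfl | rfl | rfl
    · exact absurd (by decide) hcj
    · exact (by decide : ((4 - 2 : ℕ) : ZMod 6) = 2) ▸ hintm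
    · -- a = 5 : use condition (v)
      have hint3 : IsInteriorPt tri T (q + dir (s + 3)) :=
        (by decide : ((5 - 2 : ℕ) : ZMod 6) = 3) ▸ hintm
      have hxy_ne : q + dir (s + 1) ≠ q + dir (s + 3) := point_ne q s 1 3 (by decide)
      rcases hT.1.2.2.2 _ _ hint1 hint3 hxy_ne
          ⟨q, hqTb, (adj_add_dir q (s + 1)).symm, (adj_add_dir q (s + 3)).symm⟩ with
        hadj | ⟨r, hrint, hr1, hr2, hpr, hqr⟩
      · exact absurd hadj (not_adj_pat q s 1 3 (by decide) (by decide))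
      · obtain ⟨t, rfl⟩ := (tri_adj_iff _ r).1 hpr
        obtain ⟨u, hu⟩ := (tri_adj_iff _ _).1 hqr
        have heq : dir (s + 1) + dir t = dir (s + 3) + dir u := by
          have h := hu
          apply add_left_cancel (a := q)
          linear_combination h
        rcases mid_char s t u heq with h0 | h2
        · exfalso
          have hrq : q + dir (s + 1) + dir t = q := by rw [add_assoc, h0, add_zero]
          exact hqTb.2.1 (hrq ▸ hrint)
        · have hr2' : q + dir (s + 1) + dir t = q + dir (s + 2) := by rw [add_assoc, h2]
          rw [hr2'] at hrint
          exact hrint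
  · rcases ha with rfl | rfl | rfl
    · rw [val3] at hc; omega
    · exact absurd (by decide) hcj
    · exact (by decide : ((5 - 2 : ℕ) : ZMod 6) = 3) ▸ hintm
  · rcases ha with rfl | rfl | rfl
    · rw [val4] at hc; omega
    · rw [val4] at hc; omega
    · exact absurd (by decide) hcj
  · rw [val5] at hc; omega

/-- The `W`-membership table on the hexagon around a common boundary point. -/
lemma window_Wtab (hT : IsSmoothDomain tri T) (hW : IsHole tri T W)
    (hqTb : IsBoundaryPt tri T q) (hqWb : IsBoundaryPt tri W q)
    (s : ZMod 6) (a : ℕ) (ha : a = 3 ∨ a = 4 ∨ a = 5)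
    (hwin : ∀ k, q + dir k ∈ T ↔ win s a k) :
    ∀ k, q + dir k ∈ W ↔ (¬ win s a k ∨ k = s ∨ k = s + ((a - 1 : ℕ) : ZMod 6)) := by
  have ha5 : a ≤ 5 := by rcases ha with rfl | rfl | rfl <;> omega
  have hintW := complement_interiorW hW hqWb s a ha hwin
  have hintT := window_interiorT hT hqTb s a ha hwin
  have hsW : q + dir s ∈ W := by
    have h5 := hintW (s + 5) (by rw [notwin_iff, val5]; omega)
    exact h5.2 _ (adj_s_c q s 5 (Or.inr rfl)).symm
  have hjW : q + dir (s + ((a - 1 : ℕ) : ZMod 6)) ∈ W := by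
    have h := hintW (s + (((a - 1 : ℕ) : ZMod 6) + 1))
      (by rw [notwin_iff]; rcases ha with rfl | rfl | rfl <;> decide)
    exact h.2 _ (adj_pat q s _ _ (Or.inl rfl))
  intro k
  constructor
  · intro hkW
    by_contra hc
    push_neg at hc
    obtain ⟨h1, h2, h3⟩ := hc
    exact intT_notW hW (hintT k h1 h2 h3) hkW
  · rintro (h | rfl | rfl)
    · exact (hintW k h).1
    · exact hsW
    · exact hjW

/-- Master ring-1 structure lemma at a common boundary point `q` of `T` and its hole `W`. -/
lemma ring1_table (hT : IsSmoothDomain tri T) (hW : IsHole tri T W)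
    (hqTb : IsBoundaryPt tri T q) (hqWb : IsBoundaryPt tri W q) :
    ∃ (s : ZMod 6) (a : ℕ), (a = 3 ∨ a = 4 ∨ a = 5) ∧
      (∀ k, q + dir k ∈ T ↔ win s a k) ∧
      (∀ k, q + dir k ∈ W ↔ (¬ win s a k ∨ k = s ∨ k = s + ((a - 1 : ℕ) : ZMod 6))) ∧
      (∀ k, win s a k → k ≠ s → k ≠ s + ((a - 1 : ℕ) : ZMod 6) →
        IsInteriorPt tri T (q + dir k)) ∧
      (∀ k, ¬ win s a k → IsInteriorPt tri W (q + dir k)) := by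
  classical
  obtain ⟨hqTm, hqTni, y₁, hy₁adj, hy₁int⟩ := hqTb
  have hqTb : IsBoundaryPt tri T q := ⟨hqTm, hqTni, y₁, hy₁adj, hy₁int⟩
  set m : ZMod 6 → Bool := fun k => decide (q + dir k ∈ T) with hm
  have hm1 : ∀ k, m k = true ↔ q + dir k ∈ T := by intro k; simp [hm]
  have h1 : ∃ k, m k = true := by
    obtain ⟨k, rfl⟩ := (tri_adj_iff q y₁).1 hy₁adj
    exact ⟨k, (hm1 k).2 hy₁int.1⟩
  have h2 : ∃ k, m k = false := by
    have : ∃ y, tri.Adj q y ∧ y ∉ T := by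
      by_contra hc
      push_neg at hc
      exact hqTni ⟨hqTm, hc⟩
    obtain ⟨y, hyadj, hyn⟩ := this
    obtain ⟨k, rfl⟩ := (tri_adj_iff q y).1 hyadj
    refine ⟨k, ?_⟩
    simp [hm, hyn]
  have h3 : ∀ k, m k = true → m (k + 1) = true ∨ m (k - 1) = true := by
    intro k hk
    have hkT : q + dir k ∈ T := (hm1 k).1 hk
    have hmem : q + dir k ∈ nbrs tri T q := ⟨hkT, adj_add_dir q k⟩
    obtain ⟨⟨y, hy⟩, -⟩ := hT.1.1 q hqTm (q + dir k) hmem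
    obtain ⟨⟨hyT, hyadj⟩, hyadj2⟩ := hy
    obtain ⟨k', rfl⟩ := (tri_adj_iff q _).1 hyadj
    rcases (adj_dir_dir q k k').1 hyadj2 with rfl | rfl
    · exact Or.inl ((hm1 _).2 hyT)
    · exact Or.inr ((hm1 _).2 hyT)
  have h4 : ∀ k, ¬(m k = true ∧ m (k + 1) = true ∧ m (k - 1) = false ∧
      m (k + 2) = false) := by
    rintro k ⟨hk, hk1, hkm, hk2⟩
    have hkT : q + dir k ∈ T := (hm1 k).1 hk
    have hk1T : q + dir (k + 1) ∈ T := (hm1 _).1 hk1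
    have hkmT : q + dir (k - 1) ∉ T := by
      intro hc; rw [← hm1] at hc; rw [hkm] at hc; exact Bool.false_ne_true hc
    have hk2T : q + dir (k + 2) ∉ T := by
      intro hc; rw [← hm1] at hc; rw [hk2] at hc; exact Bool.false_ne_true hc
    have hb1 : IsBoundaryPt tri T (q + dir k) := by
      refine bdry_of_not_int hT.1 hkT ?_
      rintro ⟨-, hall⟩
      exact hkmT (hall _ ((adj_dir_dir q k (k - 1)).2 (Or.inr rfl)))
    have hb2 : IsBoundaryPt tri T (q + dir (k + 1)) := by
      refine bdry_of_not_int hT.1 hk1T ?_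
      rintro ⟨-, hall⟩
      refine hk2T (hall _ ((adj_dir_dir q (k + 1) (k + 2)).2 (Or.inl ?_)))
      ring
    obtain ⟨-, hind⟩ := hT.1.2.2.1 q hqTb
    exact hind _ ⟨hb1, adj_add_dir q k⟩ _ ⟨hb2, adj_add_dir q (k + 1)⟩
      ((adj_dir_dir q k (k + 1)).2 (Or.inl rfl))
  obtain ⟨s, hcl⟩ := arc_classify m h1 h2 h3 h4
  have main : ∀ a : ℕ, (a = 3 ∨ a = 4 ∨ a = 5) → (∀ k, m k = true ↔ win s a k) →
      (∀ k, q + dir k ∈ T ↔ win s a k) := by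
    intro a ha hc k
    exact (hm1 k).symm.trans (hc k)
  rcases hcl with hc | hc | hc
  · have hwin := main 3 (Or.inl rfl) hc
    exact ⟨s, 3, Or.inl rfl, hwin,
      window_Wtab hT hW hqTb hqWb s 3 (Or.inl rfl) hwin,
      window_interiorT hT hqTb s 3 (Or.inl rfl) hwin,
      complement_interiorW hW hqWb s 3 (Or.inl rfl) hwin⟩
  · have hwin := main 4 (Or.inr (Or.inl rfl)) hc
    exact ⟨s, 4, Or.inr (Or.inl rfl), hwin,
      window_Wtab hT hW hqTb hqWb s 4 (Or.inr (Or.inl rfl)) hwin,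
      window_interiorT hT hqTb s 4 (Or.inr (Or.inl rfl)) hwin,
      complement_interiorW hW hqWb s 4 (Or.inr (Or.inl rfl)) hwin⟩
  · have hwin := main 5 (Or.inr (Or.inr rfl)) hc
    exact ⟨s, 5, Or.inr (Or.inr rfl), hwin,
      window_Wtab hT hW hqTb hqWb s 5 (Or.inr (Or.inr rfl)) hwin,
      window_interiorT hT hqTb s 5 (Or.inr (Or.inr rfl)) hwin,
      complement_interiorW hW hqWb s 5 (Or.inr (Or.inr rfl)) hwin⟩

end Ring1

section Counting

variable {T W : Set (ℤ × ℤ)} {p : ℤ × ℤ}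

/-- The six edges of the full hexagon ring around `p`. -/
def ring1E (p : ℤ × ℤ) : Set (Sym2 (ℤ × ℤ)) :=
  {e | ∃ k : ZMod 6, e = s(p + dir k, p + dir (k + 1))}

lemma ring1E_card (p : ℤ × ℤ) : (ring1E p).ncard = 6 := by
  classical
  have himg : ring1E p =
      ↑(Finset.image (fun k : ZMod 6 => s(p + dir k, p + dir (k + 1))) Finset.univ) := by
    ext e
    simp [ring1E, eq_comm]
  rw [himg, Set.ncard_coe_finset]
  have hfun : (fun k : ZMod 6 => s(p + dir k, p + dir (k + 1))) =
      (Sym2.map (fun x => p + x)) ∘ (fun k : ZMod 6 => s(dir k, dir (k + 1))) := by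
    funext k
    simp [Sym2.map_pair_eq]
  rw [hfun, ← Finset.image_image,
    Finset.card_image_of_injective _ (Sym2.map.injective fun a b h => by simpa using h)]
  decide

lemma ring1E_finite (p : ℤ × ℤ) : (ring1E p).Finite := by
  classical
  have himg : ring1E p =
      ↑(Finset.image (fun k : ZMod 6 => s(p + dir k, p + dir (k + 1))) Finset.univ) := by
    ext e
    simp [ring1E, eq_comm]
  rw [himg]
  exact Finset.finite_toSet _

lemma consec_cover : ∀ (s : ZMod 6) (a : ℕ), (a = 3 ∨ a = 4 ∨ a = 5) → ∀ k,
    (win s a k ∧ win s a (k + 1)) ∨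
    ((¬ win s a k ∨ k = s ∨ k = s + ((a - 1 : ℕ) : ZMod 6)) ∧
     (¬ win s a (k + 1) ∨ k + 1 = s ∨ k + 1 = s + ((a - 1 : ℕ) : ZMod 6))) := by
  intro s a ha
  rcases ha with rfl | rfl | rfl <;> revert s <;> decide

lemma endpoints_not_consec : ∀ (s : ZMod 6) (a : ℕ), (a = 3 ∨ a = 4 ∨ a = 5) → ∀ i i' : ZMod 6,
    (i' = i + 1 ∨ i' = i - 1) → (i = s ∨ i = s + ((a - 1 : ℕ) : ZMod 6)) →
    (i' = s ∨ i' = s + ((a - 1 : ℕ) : ZMod 6)) → False := by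
  intro s a ha
  rcases ha with rfl | rfl | rfl <;> revert s <;> decide

lemma winboth : ∀ (s : ZMod 6) (a : ℕ), (a = 3 ∨ a = 4 ∨ a = 5) → ∀ k,
    win s a k → (¬ win s a k ∨ k = s ∨ k = s + ((a - 1 : ℕ) : ZMod 6)) →
    (k = s ∨ k = s + ((a - 1 : ℕ) : ZMod 6)) := by
  intro s a ha
  rcases ha with rfl | rfl | rfl <;> revert s <;> decide

/-- the radius-1 count: `|S₁(p) ∩ W| + |S₁(p) ∩ T| = 6`. -/
lemma count_one (hpT : p ∈ T) (hpW : p ∈ W)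
    (s : ZMod 6) (a : ℕ) (ha : a = 3 ∨ a = 4 ∨ a = 5)
    (hTt : ∀ k, p + dir k ∈ T ↔ win s a k)
    (hWt : ∀ k, p + dir k ∈ W ↔ (¬ win s a k ∨ k = s ∨ k = s + ((a - 1 : ℕ) : ZMod 6))) :
    arcLen tri W p 1 + arcLen tri T p 1 = 6 := by
  have extract : ∀ (S : Set (ℤ × ℤ)), p ∈ S → sphEdges tri S p 1 ⊆ ring1E p := by
    rintro S hpS e ⟨x, y, rfl, hx, hy, hxy⟩
    rw [mem_sphVerts_one hpS] at hx hy
    obtain ⟨i, rfl⟩ := (tri_adj_iff p x).1 hx.2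
    obtain ⟨i', rfl⟩ := (tri_adj_iff p y).1 hy.2
    rcases (adj_dir_dir p i i').1 hxy with rfl | rfl
    · exact ⟨i, rfl⟩
    · refine ⟨i - 1, ?_⟩
      rw [sub_add_cancel, Sym2.eq_swap]
  have hUnion : sphEdges tri W p 1 ∪ sphEdges tri T p 1 = ring1E p := by
    apply Set.Subset.antisymm
    · rintro e (he | he)
      exacts [extract W hpW he, extract T hpT he]
    · rintro e ⟨k, rfl⟩
      have hadj : tri.Adj (p + dir k) (p + dir (k + 1)) :=
        (adj_dir_dir p k (k + 1)).2 (Or.inl rfl)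
      rcases consec_cover s a ha k with ⟨h1, h2⟩ | ⟨h1, h2⟩
      · refine Or.inr ⟨_, _, rfl, ?_, ?_, hadj⟩
        · exact (mem_sphVerts_one hpT).2 ⟨(hTt k).2 h1, adj_add_dir p k⟩
        · exact (mem_sphVerts_one hpT).2 ⟨(hTt (k + 1)).2 h2, adj_add_dir p (k + 1)⟩
      · refine Or.inl ⟨_, _, rfl, ?_, ?_, hadj⟩
        · exact (mem_sphVerts_one hpW).2 ⟨(hWt k).2 h1, adj_add_dir p k⟩
        · exact (mem_sphVerts_one hpW).2 ⟨(hWt (k + 1)).2 h2, adj_add_dir p (k + 1)⟩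
  have hdisj : Disjoint (sphEdges tri W p 1) (sphEdges tri T p 1) := by
    rw [Set.disjoint_left]
    rintro e ⟨x, y, rfl, hx, hy, hxy⟩ ⟨x', y', he, hx', hy', hxy'⟩
    rw [mem_sphVerts_one hpW] at hx hy
    rw [mem_sphVerts_one hpT] at hx' hy'
    have hxW : x ∈ W := hx.1
    have hyW : y ∈ W := hy.1
    have hxyT : x ∈ T ∧ y ∈ T := by
      rcases (Sym2.eq_iff).1 he with ⟨h1, h2⟩ | ⟨h1, h2⟩
      · exact ⟨h1 ▸ hx'.1, h2 ▸ hy'.1⟩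
      · exact ⟨h1 ▸ hy'.1, h2 ▸ hx'.1⟩
    obtain ⟨i, rfl⟩ := (tri_adj_iff p x).1 hx.2
    obtain ⟨i', rfl⟩ := (tri_adj_iff p y).1 hy.2
    have hie : i = s ∨ i = s + ((a - 1 : ℕ) : ZMod 6) :=
      winboth s a ha i ((hTt i).1 hxyT.1) ((hWt i).1 hxW)
    have hie' : i' = s ∨ i' = s + ((a - 1 : ℕ) : ZMod 6) :=
      winboth s a ha i' ((hTt i').1 hxyT.2) ((hWt i').1 hyW)
    exact endpoints_not_consec s a ha i i' ((adj_dir_dir p i i').1 hxy) hie hie'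
  have hfinW : (sphEdges tri W p 1).Finite :=
    (ring1E_finite p).subset (extract W hpW)
  have hfinT : (sphEdges tri T p 1).Finite :=
    (ring1E_finite p).subset (extract T hpT)
  have := Set.ncard_union_eq hdisj hfinW hfinT
  unfold arcLen
  rw [← this, hUnion, ring1E_card]

end Counting

section EndLemmas

variable {T W : Set (ℤ × ℤ)}

lemma dsum0 : ∀ s : ZMod 6, dir s + dir (s + 3) = 0 := by decide
lemma dsum2 : ∀ s : ZMod 6, dir s + dir (s + 2) = dir (s + 1) := by decide
lemma dsum4 : ∀ s : ZMod 6, dir s + dir (s + 4) = dir (s + 5) := by decide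

lemma enddec1 : ∀ (a' : ℕ), (a' = 3 ∨ a' = 4 ∨ a' = 5) → ∀ (s' s : ZMod 6),
    win s' a' (s + 3) → win s' a' (s + 2) → win s' a' (s + 1) → ¬ win s' a' (s + 4) →
    (¬ win s' a' s ∧ win s' a' (s + 1) ∧
      (s + 1 = s' ∨ s + 1 = s' + ((a' - 1 : ℕ) : ZMod 6)) ∧ ¬ win s' a' (s + 5)) ∨
    (win s' a' s ∧ (s = s' ∨ s = s' + ((a' - 1 : ℕ) : ZMod 6)) ∧ win s' a' (s + 1) ∧
      ¬ (s + 1 = s' ∨ s + 1 = s' + ((a' - 1 : ℕ) : ZMod 6)) ∧ ¬ win s' a' (s + 5)) ∨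
    (win s' a' s ∧ ¬ (s = s' ∨ s = s' + ((a' - 1 : ℕ) : ZMod 6)) ∧ win s' a' (s + 1) ∧
      ¬ (s + 1 = s' ∨ s + 1 = s' + ((a' - 1 : ℕ) : ZMod 6)) ∧ win s' a' (s + 5) ∧
      (s + 5 = s' ∨ s + 5 = s' + ((a' - 1 : ℕ) : ZMod 6))) := by
  intro a' ha'
  rcases ha' with rfl | rfl | rfl <;> decide

lemma enddec2 : ∀ (a' : ℕ), (a' = 3 ∨ a' = 4 ∨ a' = 5) → ∀ (s' j : ZMod 6),
    win s' a' (j + 3) → win s' a' (j + 4) → win s' a' (j + 5) → ¬ win s' a' (j + 2) →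
    (¬ win s' a' j ∧ ¬ win s' a' (j + 1) ∧ win s' a' (j + 5) ∧
      (j + 5 = s' ∨ j + 5 = s' + ((a' - 1 : ℕ) : ZMod 6))) ∨
    (win s' a' j ∧ (j = s' ∨ j = s' + ((a' - 1 : ℕ) : ZMod 6)) ∧ ¬ win s' a' (j + 1) ∧
      win s' a' (j + 5) ∧ ¬ (j + 5 = s' ∨ j + 5 = s' + ((a' - 1 : ℕ) : ZMod 6))) ∨
    (win s' a' j ∧ ¬ (j = s' ∨ j = s' + ((a' - 1 : ℕ) : ZMod 6)) ∧ win s' a' (j + 1) ∧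
      (j + 1 = s' ∨ j + 1 = s' + ((a' - 1 : ℕ) : ZMod 6)) ∧ win s' a' (j + 5) ∧
      ¬ (j + 5 = s' ∨ j + 5 = s' + ((a' - 1 : ℕ) : ZMod 6))) := by
  intro a' ha'
  rcases ha' with rfl | rfl | rfl <;> decide

/-- Trichotomy at the "lower" endpoint `q + dir s` of the arc (interior `T` side at
`s + 1`, hole side at `s + 5`). The three points are `V_s`, `U_s`, `C_s = U_{s-1}`. -/
lemma end_trichotomy (hT : IsSmoothDomain tri T) (hW : IsHole tri T W)
    {q : ℤ × ℤ} {s : ZMod 6}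
    (hqT : q ∈ T) (hqW : q ∈ W)
    (haT : q + dir s ∈ T) (haW : q + dir s ∈ W)
    (hint1 : IsInteriorPt tri T (q + dir (s + 1)))
    (hint5 : IsInteriorPt tri W (q + dir (s + 5))) :
    (q + dir s + dir s ∉ T ∧ q + dir s + dir s ∈ W ∧
     q + dir s + dir (s + 1) ∈ T ∧ q + dir s + dir (s + 1) ∈ W ∧
     q + dir (s + 5) + dir s ∉ T ∧ q + dir (s + 5) + dir s ∈ W) ∨
    (q + dir s + dir s ∈ T ∧ q + dir s + dir s ∈ W ∧
     q + dir s + dir (s + 1) ∈ T ∧ q + dir s + dir (s + 1) ∉ W ∧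
     q + dir (s + 5) + dir s ∉ T ∧ q + dir (s + 5) + dir s ∈ W) ∨
    (q + dir s + dir s ∈ T ∧ q + dir s + dir s ∉ W ∧
     q + dir s + dir (s + 1) ∈ T ∧ q + dir s + dir (s + 1) ∉ W ∧
     q + dir (s + 5) + dir s ∈ T ∧ q + dir (s + 5) + dir s ∈ W) := by
  have haqT : IsBoundaryPt tri T (q + dir s) := by
    refine bdry_of_not_int hT.1 haT ?_
    rintro ⟨-, hall⟩
    exact intW_sub hW hint5 (hall _ (adj_s_c q s 5 (Or.inr rfl)))
  have haqW : IsBoundaryPt tri W (q + dir s) := by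
    refine bdry_of_not_int hW.2.1.1 haW ?_
    rintro ⟨-, hall⟩
    exact intT_notW hW hint1 (hall _ ((adj_dir_dir q s (s + 1)).2 (Or.inl rfl)))
  obtain ⟨s', a', ha', hTt', hWt', -, -⟩ := ring1_table hT hW haqT haqW
  have e3 : q + dir s + dir (s + 3) = q := by rw [add_assoc, dsum0, add_zero]
  have e2 : q + dir s + dir (s + 2) = q + dir (s + 1) := by rw [add_assoc, dsum2]
  have e4 : q + dir s + dir (s + 4) = q + dir (s + 5) := by rw [add_assoc, dsum4]
  have e5 : q + dir s + dir (s + 5) = q + dir (s + 5) + dir s := by ring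
  have hadjU : tri.Adj (q + dir (s + 1)) (q + dir s + dir (s + 1)) := by
    rw [show q + dir s + dir (s + 1) = q + dir (s + 1) + dir s by ring]
    exact adj_add_dir _ s
  have f3 : win s' a' (s + 3) := (hTt' (s + 3)).1 (by rw [e3]; exact hqT)
  have f2 : win s' a' (s + 2) := (hTt' (s + 2)).1 (by rw [e2]; exact hint1.1)
  have f1 : win s' a' (s + 1) := (hTt' (s + 1)).1 (hint1.2 _ hadjU)
  have f4 : ¬ win s' a' (s + 4) := by
    intro hc
    have hmem := (hTt' (s + 4)).2 hc
    rw [e4] at hmem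
    exact intW_sub hW hint5 hmem
  rcases enddec1 a' ha' s' s f3 f2 f1 f4 with ⟨c1, c2, c3, c4⟩ | ⟨c1, c2, c3, c4, c5⟩ |
    ⟨c1, c2, c3, c4, c5, c6⟩
  · refine Or.inl ⟨fun h => c1 ((hTt' s).1 h), (hWt' s).2 (Or.inl c1),
      (hTt' (s + 1)).2 c2, (hWt' (s + 1)).2 ?_, fun h => c4 ((hTt' (s + 5)).1 (e5 ▸ h)),
      e5 ▸ ((hWt' (s + 5)).2 (Or.inl c4))⟩
    rcases c3 with h | h
    exacts [Or.inr (Or.inl h), Or.inr (Or.inr h)]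
  · refine Or.inr (Or.inl ⟨(hTt' s).2 c1, (hWt' s).2 ?_, (hTt' (s + 1)).2 c3, ?_,
      fun h => c5 ((hTt' (s + 5)).1 (e5 ▸ h)), e5 ▸ ((hWt' (s + 5)).2 (Or.inl c5))⟩)
    · rcases c2 with h | h
      exacts [Or.inr (Or.inl h), Or.inr (Or.inr h)]
    · intro h
      rcases (hWt' (s + 1)).1 h with h' | h' | h'
      exacts [h' c3, c4 (Or.inl h'), c4 (Or.inr h')]
  · refine Or.inr (Or.inr ⟨(hTt' s).2 c1, ?_, (hTt' (s + 1)).2 c3, ?_,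
      e5 ▸ ((hTt' (s + 5)).2 c5), e5 ▸ ((hWt' (s + 5)).2 ?_)⟩)
    · intro h
      rcases (hWt' s).1 h with h' | h' | h'
      exacts [h' c1, c2 (Or.inl h'), c2 (Or.inr h')]
    · intro h
      rcases (hWt' (s + 1)).1 h with h' | h' | h'
      exacts [h' c3, c4 (Or.inl h'), c4 (Or.inr h')]
    · rcases c6 with h | h
      exacts [Or.inr (Or.inl h), Or.inr (Or.inr h)]

/-- Trichotomy at the "upper" endpoint `q + dir j` of the arc (interior `T` side at
`j + 5`, hole side at `j + 1`). The three points are `V_j`, `U_j`, `C_j = U_{j-1}`. -/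
lemma end_trichotomy' (hT : IsSmoothDomain tri T) (hW : IsHole tri T W)
    {q : ℤ × ℤ} {j : ZMod 6}
    (hqT : q ∈ T) (hqW : q ∈ W)
    (haT : q + dir j ∈ T) (haW : q + dir j ∈ W)
    (hint5 : IsInteriorPt tri T (q + dir (j + 5)))
    (hint1 : IsInteriorPt tri W (q + dir (j + 1))) :
    (q + dir j + dir j ∉ T ∧ q + dir j + dir j ∈ W ∧
     q + dir j + dir (j + 1) ∉ T ∧ q + dir j + dir (j + 1) ∈ W ∧
     q + dir (j + 5) + dir j ∈ T ∧ q + dir (j + 5) + dir j ∈ W) ∨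
    (q + dir j + dir j ∈ T ∧ q + dir j + dir j ∈ W ∧
     q + dir j + dir (j + 1) ∉ T ∧ q + dir j + dir (j + 1) ∈ W ∧
     q + dir (j + 5) + dir j ∈ T ∧ q + dir (j + 5) + dir j ∉ W) ∨
    (q + dir j + dir j ∈ T ∧ q + dir j + dir j ∉ W ∧
     q + dir j + dir (j + 1) ∈ T ∧ q + dir j + dir (j + 1) ∈ W ∧
     q + dir (j + 5) + dir j ∈ T ∧ q + dir (j + 5) + dir j ∉ W) := by
  have haqT : IsBoundaryPt tri T (q + dir j) := by
    refine bdry_of_not_int hT.1 haT ?_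
    rintro ⟨-, hall⟩
    exact intW_sub hW hint1 (hall _ ((adj_dir_dir q j (j + 1)).2 (Or.inl rfl)))
  have haqW : IsBoundaryPt tri W (q + dir j) := by
    refine bdry_of_not_int hW.2.1.1 haW ?_
    rintro ⟨-, hall⟩
    exact intT_notW hW hint5 (hall _ (adj_s_c q j 5 (Or.inr rfl)))
  obtain ⟨s', a', ha', hTt', hWt', -, -⟩ := ring1_table hT hW haqT haqW
  have e3 : q + dir j + dir (j + 3) = q := by rw [add_assoc, dsum0, add_zero]
  have e2 : q + dir j + dir (j + 2) = q + dir (j + 1) := by rw [add_assoc, dsum2]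
  have e4 : q + dir j + dir (j + 4) = q + dir (j + 5) := by rw [add_assoc, dsum4]
  have e5 : q + dir j + dir (j + 5) = q + dir (j + 5) + dir j := by ring
  have hadjU : tri.Adj (q + dir (j + 5)) (q + dir j + dir (j + 5)) := by
    rw [show q + dir j + dir (j + 5) = q + dir (j + 5) + dir j by ring]
    exact adj_add_dir _ j
  have f3 : win s' a' (j + 3) := (hTt' (j + 3)).1 (by rw [e3]; exact hqT)
  have f4 : win s' a' (j + 4) := (hTt' (j + 4)).1 (by rw [e4]; exact hint5.1)
  have f5 : win s' a' (j + 5) := (hTt' (j + 5)).1 (hint5.2 _ hadjU)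
  have f2 : ¬ win s' a' (j + 2) := by
    intro hc
    have hmem := (hTt' (j + 2)).2 hc
    rw [e2] at hmem
    exact intW_sub hW hint1 hmem
  have hWor : ∀ k, ¬ win s' a' k → q + dir j + dir k ∈ W := fun k h =>
    (hWt' k).2 (Or.inl h)
  rcases enddec2 a' ha' s' j f3 f4 f5 f2 with ⟨c1, c2, c3, c4⟩ | ⟨c1, c2, c3, c4, c5⟩ |
    ⟨c1, c2, c3, c4, c5, c6⟩
  · refine Or.inl ⟨fun h => c1 ((hTt' j).1 h), (hWt' j).2 (Or.inl c1),
      fun h => c2 ((hTt' (j + 1)).1 h), (hWt' (j + 1)).2 (Or.inl c2),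
      e5 ▸ ((hTt' (j + 5)).2 c3), e5 ▸ ((hWt' (j + 5)).2 ?_)⟩
    rcases c4 with h | h
    exacts [Or.inr (Or.inl h), Or.inr (Or.inr h)]
  · refine Or.inr (Or.inl ⟨(hTt' j).2 c1, (hWt' j).2 ?_,
      fun h => c3 ((hTt' (j + 1)).1 h), (hWt' (j + 1)).2 (Or.inl c3),
      e5 ▸ ((hTt' (j + 5)).2 c4), ?_⟩)
    · rcases c2 with h | h
      exacts [Or.inr (Or.inl h), Or.inr (Or.inr h)]
    · intro h
      rw [← e5] at h
      rcases (hWt' (j + 5)).1 h with h' | h' | h'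
      exacts [h' c4, c5 (Or.inl h'), c5 (Or.inr h')]
  · refine Or.inr (Or.inr ⟨(hTt' j).2 c1, ?_, (hTt' (j + 1)).2 c3, (hWt' (j + 1)).2 ?_,
      e5 ▸ ((hTt' (j + 5)).2 c5), ?_⟩)
    · intro h
      rcases (hWt' j).1 h with h' | h' | h'
      exacts [h' c1, c2 (Or.inl h'), c2 (Or.inr h')]
    · rcases c4 with h | h
      exacts [Or.inr (Or.inl h), Or.inr (Or.inr h)]
    · intro h
      rw [← e5] at h
      rcases (hWt' (j + 5)).1 h with h' | h' | h'
      exacts [h' c5, c6 (Or.inl h'), c6 (Or.inr h')]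

end EndLemmas

section CountTwo

variable {T W : Set (ℤ × ℤ)} {p : ℤ × ℤ}

/-- The twelve edges of the distance-2 ring around `p`. -/
def ring2E (p : ℤ × ℤ) : Set (Sym2 (ℤ × ℤ)) :=
  {e | ∃ k : ZMod 6, e = s(p + dir k + dir k, p + dir k + dir (k + 1)) ∨
       e = s(p + dir k + dir (k + 1), p + dir (k + 1) + dir (k + 1))}

lemma ring2E_eq (p : ℤ × ℤ) : ring2E p =
    ↑(Finset.image (fun kb : ZMod 6 × Bool =>
        if kb.2 then s(p + dir kb.1 + dir kb.1, p + dir kb.1 + dir (kb.1 + 1))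
        else s(p + dir kb.1 + dir (kb.1 + 1), p + dir (kb.1 + 1) + dir (kb.1 + 1)))
      Finset.univ) := by
  ext e
  simp only [ring2E, Set.mem_setOf_eq, Finset.coe_image, Set.mem_image, Finset.mem_coe,
    Finset.mem_univ, true_and, Finset.coe_univ, Set.image_univ, Set.mem_range]
  constructor
  · rintro ⟨k, rfl | rfl⟩
    exacts [⟨(k, true), rfl⟩, ⟨(k, false), rfl⟩]
  · rintro ⟨⟨k, b⟩, h⟩
    cases b
    · exact ⟨k, Or.inr h.symm⟩
    · exact ⟨k, Or.inl h.symm⟩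

lemma ring2E_card (p : ℤ × ℤ) : (ring2E p).ncard = 12 := by
  classical
  rw [ring2E_eq, Set.ncard_coe_finset]
  have hfun : (fun kb : ZMod 6 × Bool =>
      if kb.2 then s(p + dir kb.1 + dir kb.1, p + dir kb.1 + dir (kb.1 + 1))
      else s(p + dir kb.1 + dir (kb.1 + 1), p + dir (kb.1 + 1) + dir (kb.1 + 1))) =
      (Sym2.map (fun x => p + x)) ∘ (fun kb : ZMod 6 × Bool =>
        if kb.2 then s(dir kb.1 + dir kb.1, dir kb.1 + dir (kb.1 + 1))
        else s(dir kb.1 + dir (kb.1 + 1), dir (kb.1 + 1) + dir (kb.1 + 1))) := by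
    funext kb
    rcases kb with ⟨k, b⟩
    cases b <;> simp [Sym2.map_pair_eq, add_assoc]
  rw [hfun, ← Finset.image_image,
    Finset.card_image_of_injective _ (Sym2.map.injective fun a b h => by simpa using h)]
  decide

lemma ring2E_finite (p : ℤ × ℤ) : (ring2E p).Finite := by
  rw [ring2E_eq]; exact Finset.finite_toSet _

lemma r2nd : ∀ k k' : ZMod 6, (k' = k ∨ k' = k + 1) →
    dir k + dir k' ≠ 0 ∧ ∀ u : ZMod 6, dir k + dir k' ≠ dir u := by decide

lemma r2_ne (p : ℤ × ℤ) {k k' : ZMod 6} (h : k' = k ∨ k' = k + 1) :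
    p + dir k + dir k' ≠ p := by
  intro hc
  exact (r2nd k k' h).1 (by rwa [add_assoc, add_eq_left] at hc)

lemma r2_nadj (p : ℤ × ℤ) {k k' : ZMod 6} (h : k' = k ∨ k' = k + 1) :
    ¬ tri.Adj p (p + dir k + dir k') := by
  intro hadj
  obtain ⟨u, hu⟩ := (tri_adj_iff p _).1 hadj
  rw [add_assoc] at hu
  exact (r2nd k k' h).2 u (add_left_cancel hu)

lemma r2adj_off : ∀ k : ZMod 6,
    ((dir k + dir k) - (dir k + dir (k + 1)) ∈ hexDirs) ∧
    ((dir k + dir (k + 1)) - (dir (k + 1) + dir (k + 1)) ∈ hexDirs) := by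
  intro k
  rw [mem_hexDirs_iff, mem_hexDirs_iff]
  revert k; decide

lemma ring2_adj (p : ℤ × ℤ) (k : ZMod 6) :
    tri.Adj (p + dir k + dir k) (p + dir k + dir (k + 1)) ∧
    tri.Adj (p + dir k + dir (k + 1)) (p + dir (k + 1) + dir (k + 1)) := by
  constructor
  · rw [add_assoc, add_assoc, adj_offset]
    exact (r2adj_off k).1
  · rw [add_assoc, add_assoc, adj_offset]
    exact (r2adj_off k).2

lemma offclass : ∀ i t : ZMod 6, dir i + dir t = 0 ∨ (∃ u, dir i + dir t = dir u) ∨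
    (∃ k, (dir i + dir t = dir k + dir k ∧ i = k) ∨
          (dir i + dir t = dir k + dir (k + 1) ∧ (i = k ∨ i = k + 1))) := by decide

lemma pairclass : ∀ k k' : ZMod 6,
    (¬ ∃ u, (dir k + dir k) - (dir k' + dir k') = dir u) ∧
    ((∃ u, (dir k + dir k) - (dir k' + dir (k' + 1)) = dir u) → (k' = k ∨ k' + 1 = k)) ∧
    (¬ ∃ u, (dir k + dir (k + 1)) - (dir k' + dir (k' + 1)) = dir u) := by decide

lemma vnbr : ∀ i k : ZMod 6, (∃ u, dir i - (dir k + dir k) = dir u) → i = k := by decide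

lemma idx55 : ∀ z : ZMod 6, z + 5 + 1 = z := by
  intro z
  rw [add_assoc, show (5 : ZMod 6) + 1 = 0 by decide, add_zero]

lemma idx15 (z : ZMod 6) {k : ZMod 6} (h : k + 1 = z) : k = z + 5 := by
  rw [← h, add_assoc, show (1 : ZMod 6) + 5 = 0 by decide, add_zero]

/-- adjacency of the window point `p + dir i` to a ring-2 point gives the index relation. -/
lemma adj_to_v {i k : ZMod 6} (h : tri.Adj (p + dir i) (p + dir k + dir k)) : i = k := by
  rw [add_assoc] at h
  exact vnbr i k ⟨_, ((mem_hexDirs_iff _).1 ((adj_offset p _ _).1 h)).choose_spec⟩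

end CountTwo

section CountTwoMain

variable {T W : Set (ℤ × ℤ)} {p : ℤ × ℤ}

lemma extract2 (S : Set (ℤ × ℤ)) (hpS : p ∈ S) : sphEdges tri S p 2 ⊆ ring2E p := by
  rintro e ⟨x, y, rfl, hx, hy, hxy⟩
  obtain ⟨hxS, hxne, hxnadj, m, hmS, hpm, hmx⟩ := (mem_sphVerts_two hpS).1 hx
  obtain ⟨hyS, hyne, hynadj, m', hm'S, hpm', hm'y⟩ := (mem_sphVerts_two hpS).1 hy
  obtain ⟨i, rfl⟩ := (tri_adj_iff p m).1 hpm
  obtain ⟨t, rfl⟩ := (tri_adj_iff _ x).1 hmx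
  obtain ⟨i', rfl⟩ := (tri_adj_iff p m').1 hpm'
  obtain ⟨t', rfl⟩ := (tri_adj_iff _ y).1 hm'y
  have offadj : ∀ (u v : ℤ × ℤ), tri.Adj (p + u) (p + v) → ∃ w, u - v = dir w :=
    fun u v h => (mem_hexDirs_iff _).1 ((adj_offset p u v).1 h)
  rcases offclass i t with h0 | ⟨u, hu⟩ | ⟨k, hk⟩
  · exact absurd (by rw [add_assoc, h0, add_zero]) hxne
  · exact absurd (by rw [add_assoc, hu]; exact adj_add_dir p u) hxnadj
  rcases offclass i' t' with h0 | ⟨u, hu⟩ | ⟨k', hk'⟩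
  · exact absurd (by rw [add_assoc, h0, add_zero]) hyne
  · exact absurd (by rw [add_assoc, hu]; exact adj_add_dir p u) hynadj
  rcases hk with ⟨hxe, -⟩ | ⟨hxe, -⟩ <;> rcases hk' with ⟨hye, -⟩ | ⟨hye, -⟩
  · exfalso
    have hxp : p + dir i + dir t = p + dir k + dir k := by rw [add_assoc, hxe, ← add_assoc]
    have hyp : p + dir i' + dir t' = p + dir k' + dir k' := by rw [add_assoc, hye, ← add_assoc]
    rw [hxp, hyp, add_assoc p, add_assoc p] at hxy
    exact (pairclass k k').1 (offadj _ _ hxy)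
  · have hxp : p + dir i + dir t = p + dir k + dir k := by rw [add_assoc, hxe, ← add_assoc]
    have hyp : p + dir i' + dir t' = p + dir k' + dir (k' + 1) := by
      rw [add_assoc, hye, ← add_assoc]
    rw [hxp, hyp] at hxy ⊢
    rw [add_assoc p, add_assoc p] at hxy
    rcases (pairclass k k').2.1 (offadj _ _ hxy) with rfl | hrel
    · exact ⟨k', Or.inl rfl⟩
    · refine ⟨k', Or.inr ?_⟩
      rw [← hrel, Sym2.eq_swap]
  · have hxp : p + dir i + dir t = p + dir k + dir (k + 1) := by
      rw [add_assoc, hxe, ← add_assoc]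
    have hyp : p + dir i' + dir t' = p + dir k' + dir k' := by rw [add_assoc, hye, ← add_assoc]
    rw [hxp, hyp] at hxy ⊢
    rw [add_assoc p, add_assoc p] at hxy
    rcases (pairclass k' k).2.1 (offadj _ _ hxy.symm) with rfl | hrel
    · exact ⟨k, Or.inl Sym2.eq_swap⟩
    · refine ⟨k, Or.inr ?_⟩
      rw [← hrel]
  · exfalso
    have hxp : p + dir i + dir t = p + dir k + dir (k + 1) := by
      rw [add_assoc, hxe, ← add_assoc]
    have hyp : p + dir i' + dir t' = p + dir k' + dir (k' + 1) := by
      rw [add_assoc, hye, ← add_assoc]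
    rw [hxp, hyp, add_assoc p, add_assoc p] at hxy
    exact (pairclass k k').2.2 (offadj _ _ hxy)

lemma count_two (hT : IsSmoothDomain tri T) (hW : IsHole tri T W)
    (hpT : IsBoundaryPt tri T p) (hpW : IsBoundaryPt tri W p)
    (s : ZMod 6) (a : ℕ) (ha : a = 3 ∨ a = 4 ∨ a = 5)
    (hTt : ∀ k, p + dir k ∈ T ↔ win s a k)
    (hWt : ∀ k, p + dir k ∈ W ↔ (¬ win s a k ∨ k = s ∨ k = s + ((a - 1 : ℕ) : ZMod 6)))
    (hintT : ∀ k, win s a k → k ≠ s → k ≠ s + ((a - 1 : ℕ) : ZMod 6) →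
      IsInteriorPt tri T (p + dir k))
    (hintW : ∀ k, ¬ win s a k → IsInteriorPt tri W (p + dir k)) :
    arcLen tri W p 2 + arcLen tri T p 2 = 12 := by
  have ha3 : 3 ≤ a := by rcases ha with rfl | rfl | rfl <;> omega
  have ha5 : a ≤ 5 := by rcases ha with rfl | rfl | rfl <;> omega
  have hpTm : p ∈ T := hpT.1
  have hpWm : p ∈ W := hpW.1
  set c1 : ZMod 6 := ((a - 1 : ℕ) : ZMod 6) with hc1
  have hwin0 : win s a s := by unfold win; rw [sub_self, val0]; omega
  have hwin1 : win s a (s + 1) := by rw [wincalc, val1]; omega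
  have hwinj : win s a (s + c1) := by
    rw [wincalc, hc1]; rcases ha with rfl | rfl | rfl <;> decide
  have hnwin5 : ¬ win s a (s + 5) := by rw [wincalc, val5]; omega
  have haTs : p + dir s ∈ T := (hTt s).2 hwin0
  have haWs : p + dir s ∈ W := (hWt s).2 (Or.inr (Or.inl rfl))
  have haTj : p + dir (s + c1) ∈ T := (hTt _).2 hwinj
  have haWj : p + dir (s + c1) ∈ W := (hWt _).2 (Or.inr (Or.inr rfl))
  have hne1 : ∀ (c c' : ZMod 6), c ≠ c' → s + c ≠ s + c' :=
    fun c c' h hc => h (add_left_cancel hc)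
  have hne0 : ∀ (c : ZMod 6), c ≠ 0 → s + c ≠ s := fun c h hc =>
    h (add_left_cancel (hc.trans (add_zero s).symm))
  have hint_s1 : IsInteriorPt tri T (p + dir (s + 1)) :=
    hintT _ hwin1 (hne0 1 (by decide))
      (hne1 1 c1 (by rw [hc1]; rcases ha with rfl | rfl | rfl <;> decide))
  have hj5 : s + c1 + 5 = s + ((a - 2 : ℕ) : ZMod 6) := by
    rw [add_assoc]
    congr 1
    rw [hc1]; rcases ha with rfl | rfl | rfl <;> decide
  have hint_j5 : IsInteriorPt tri T (p + dir (s + c1 + 5)) := by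
    rw [hj5]
    refine hintT _ (by rw [wincalc]; rcases ha with rfl | rfl | rfl <;> decide)
      (hne0 _ (by rcases ha with rfl | rfl | rfl <;> decide))
      (hne1 _ _ (by rw [hc1]; rcases ha with rfl | rfl | rfl <;> decide))
  have hint_j1 : IsInteriorPt tri W (p + dir (s + c1 + 1)) := by
    rw [add_assoc]
    exact hintW _ (by rw [notwin_iff, hc1]; rcases ha with rfl | rfl | rfl <;> decide)
  have hint_s5 : IsInteriorPt tri W (p + dir (s + 5)) := hintW _ hnwin5
  have Etr_s := end_trichotomy hT hW hpTm hpWm haTs haWs hint_s1 hint_s5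
  have Etr_j := end_trichotomy' (j := s + c1) hT hW hpTm hpWm haTj haWj hint_j5 hint_j1
  have adjaV : ∀ k : ZMod 6, tri.Adj (p + dir k) (p + dir k + dir k) :=
    fun k => adj_add_dir (p + dir k) k
  have adjaU : ∀ k : ZMod 6, tri.Adj (p + dir k) (p + dir k + dir (k + 1)) :=
    fun k => adj_add_dir (p + dir k) (k + 1)
  have adjaU' : ∀ k : ZMod 6, tri.Adj (p + dir (k + 1)) (p + dir k + dir (k + 1)) := by
    intro k
    rw [show p + dir k + dir (k + 1) = p + dir (k + 1) + dir k by ring]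
    exact adj_add_dir _ k
  have adjaC : ∀ k : ZMod 6, tri.Adj (p + dir k) (p + dir (k + 5) + dir k) := by
    intro k
    rw [show p + dir (k + 5) + dir k = p + dir k + dir (k + 5) by ring]
    exact adj_add_dir _ (k + 5)
  have memS : ∀ (S : Set (ℤ × ℤ)), p ∈ S → ∀ (i k k' : ZMod 6), (k' = k ∨ k' = k + 1) →
      p + dir i ∈ S → p + dir k + dir k' ∈ S → tri.Adj (p + dir i) (p + dir k + dir k') →
      p + dir k + dir k' ∈ sphVerts tri S p 2 :=
    fun S hpS i k k' h hm hx hadj =>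
      (mem_sphVerts_two hpS).2 ⟨hx, r2_ne p h, r2_nadj p h, _, hm, adj_add_dir p i, hadj⟩
  have cover : ring2E p ⊆ sphEdges tri W p 2 ∪ sphEdges tri T p 2 := by
    rintro e ⟨k, rfl | rfl⟩
    · -- edge s(V k, U k)
      by_cases hk : win s a k
      · by_cases hks : k = s
        · subst hks
          rcases Etr_s with ⟨h1, h2, h3, h4, h5, h6⟩ | ⟨h1, h2, h3, h4, h5, h6⟩ |
            ⟨h1, h2, h3, h4, h5, h6⟩
          · exact Or.inl ⟨_, _, rfl, memS W hpWm k k k (Or.inl rfl) haWs h2 (adjaV k),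
              memS W hpWm k k (k + 1) (Or.inr rfl) haWs h4 (adjaU k), (ring2_adj p k).1⟩
          · exact Or.inr ⟨_, _, rfl, memS T hpTm k k k (Or.inl rfl) haTs h1 (adjaV k),
              memS T hpTm k k (k + 1) (Or.inr rfl) haTs h3 (adjaU k), (ring2_adj p k).1⟩
          · exact Or.inr ⟨_, _, rfl, memS T hpTm k k k (Or.inl rfl) haTs h1 (adjaV k),
              memS T hpTm k k (k + 1) (Or.inr rfl) haTs h3 (adjaU k), (ring2_adj p k).1⟩
        · by_cases hkj : k = s + c1
          · subst hkj
            rcases Etr_j with ⟨h1, h2, h3, h4, h5, h6⟩ | ⟨h1, h2, h3, h4, h5, h6⟩ |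
              ⟨h1, h2, h3, h4, h5, h6⟩
            · exact Or.inl ⟨_, _, rfl, memS W hpWm _ _ _ (Or.inl rfl) haWj h2 (adjaV _),
                memS W hpWm _ _ _ (Or.inr rfl) haWj h4 (adjaU _), (ring2_adj p _).1⟩
            · exact Or.inl ⟨_, _, rfl, memS W hpWm _ _ _ (Or.inl rfl) haWj h2 (adjaV _),
                memS W hpWm _ _ _ (Or.inr rfl) haWj h4 (adjaU _), (ring2_adj p _).1⟩
            · exact Or.inr ⟨_, _, rfl, memS T hpTm _ _ _ (Or.inl rfl) haTj h1 (adjaV _),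
                memS T hpTm _ _ _ (Or.inr rfl) haTj h3 (adjaU _), (ring2_adj p _).1⟩
          · have hi := hintT k hk hks hkj
            exact Or.inr ⟨_, _, rfl,
              memS T hpTm k k k (Or.inl rfl) hi.1 (hi.2 _ (adjaV k)) (adjaV k),
              memS T hpTm k k (k + 1) (Or.inr rfl) hi.1 (hi.2 _ (adjaU k)) (adjaU k),
              (ring2_adj p k).1⟩
      · have hi := hintW k hk
        exact Or.inl ⟨_, _, rfl,
          memS W hpWm k k k (Or.inl rfl) hi.1 (hi.2 _ (adjaV k)) (adjaV k),
          memS W hpWm k k (k + 1) (Or.inr rfl) hi.1 (hi.2 _ (adjaU k)) (adjaU k),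
          (ring2_adj p k).1⟩
    · -- edge s(U k, V (k+1))
      by_cases hk : win s a (k + 1)
      · by_cases hks : k + 1 = s
        · have hk5 : k = s + 5 := idx15 s hks
          subst hk5
          rw [idx55 s]
          have hA : tri.Adj (p + dir (s + 5) + dir s) (p + dir s + dir s) := by
            have h := (ring2_adj p (s + 5)).2
            rwa [idx55 s] at h
          rcases Etr_s with ⟨h1, h2, h3, h4, h5, h6⟩ | ⟨h1, h2, h3, h4, h5, h6⟩ |
            ⟨h1, h2, h3, h4, h5, h6⟩
          · exact Or.inl ⟨_, _, rfl,
              memS W hpWm s (s + 5) s (Or.inr (idx55 s).symm) haWs h6 (adjaC s),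
              memS W hpWm s s s (Or.inl rfl) haWs h2 (adjaV s), hA⟩
          · exact Or.inl ⟨_, _, rfl,
              memS W hpWm s (s + 5) s (Or.inr (idx55 s).symm) haWs h6 (adjaC s),
              memS W hpWm s s s (Or.inl rfl) haWs h2 (adjaV s), hA⟩
          · exact Or.inr ⟨_, _, rfl,
              memS T hpTm s (s + 5) s (Or.inr (idx55 s).symm) haTs h5 (adjaC s),
              memS T hpTm s s s (Or.inl rfl) haTs h1 (adjaV s), hA⟩
        · by_cases hkj : k + 1 = s + c1
          · have hk5 : k = (s + c1) + 5 := idx15 _ hkj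
            subst hk5
            rw [idx55 (s + c1)]
            have hA : tri.Adj (p + dir (s + c1 + 5) + dir (s + c1))
                (p + dir (s + c1) + dir (s + c1)) := by
              have h := (ring2_adj p (s + c1 + 5)).2
              rwa [idx55 (s + c1)] at h
            rcases Etr_j with ⟨h1, h2, h3, h4, h5, h6⟩ | ⟨h1, h2, h3, h4, h5, h6⟩ |
              ⟨h1, h2, h3, h4, h5, h6⟩
            · exact Or.inl ⟨_, _, rfl,
                memS W hpWm (s + c1) (s + c1 + 5) (s + c1) (Or.inr (idx55 (s + c1)).symm)
                  haWj h6 (adjaC (s + c1)),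
                memS W hpWm (s + c1) (s + c1) (s + c1) (Or.inl rfl) haWj h2 (adjaV _), hA⟩
            · exact Or.inr ⟨_, _, rfl,
                memS T hpTm (s + c1) (s + c1 + 5) (s + c1) (Or.inr (idx55 (s + c1)).symm)
                  haTj h5 (adjaC (s + c1)),
                memS T hpTm (s + c1) (s + c1) (s + c1) (Or.inl rfl) haTj h1 (adjaV _), hA⟩
            · exact Or.inr ⟨_, _, rfl,
                memS T hpTm (s + c1) (s + c1 + 5) (s + c1) (Or.inr (idx55 (s + c1)).symm)
                  haTj h5 (adjaC (s + c1)),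
                memS T hpTm (s + c1) (s + c1) (s + c1) (Or.inl rfl) haTj h1 (adjaV _), hA⟩
          · have hi := hintT (k + 1) hk hks hkj
            exact Or.inr ⟨_, _, rfl,
              memS T hpTm (k + 1) k (k + 1) (Or.inr rfl) hi.1 (hi.2 _ (adjaU' k)) (adjaU' k),
              memS T hpTm (k + 1) (k + 1) (k + 1) (Or.inl rfl) hi.1
                (hi.2 _ (adjaV (k + 1))) (adjaV (k + 1)),
              (ring2_adj p k).2⟩
      · have hi := hintW (k + 1) hk
        exact Or.inl ⟨_, _, rfl,
          memS W hpWm (k + 1) k (k + 1) (Or.inr rfl) hi.1 (hi.2 _ (adjaU' k)) (adjaU' k),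
          memS W hpWm (k + 1) (k + 1) (k + 1) (Or.inl rfl) hi.1
            (hi.2 _ (adjaV (k + 1))) (adjaV (k + 1)),
          (ring2_adj p k).2⟩
  -- the two sphere edge sets are disjoint
  have final : ∀ z w : ZMod 6, (w = z ∨ w + 1 = z) → win s a z →
      (¬ win s a z ∨ z = s ∨ z = s + c1) →
      p + dir z + dir z ∈ T → p + dir z + dir z ∈ W →
      p + dir w + dir (w + 1) ∈ T → p + dir w + dir (w + 1) ∈ W → False := by
    intro z w hrel hwz hwWz hVT hVW hUT hUW
    rcases winboth s a ha z hwz hwWz with rfl | rfl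
    · rcases hrel with rfl | hrel
      · rcases Etr_s with ⟨h1, -, -, -, -, -⟩ | ⟨-, -, -, h4, -, -⟩ | ⟨-, h2, -, -, -, -⟩
        exacts [h1 hVT, h4 hUW, h2 hVW]
      · obtain rfl : w = z + 5 := idx15 z hrel
        rw [idx55 z] at hUT hUW
        rcases Etr_s with ⟨h1, -, -, -, -, -⟩ | ⟨-, -, -, -, h5, -⟩ | ⟨-, h2, -, -, -, -⟩
        exacts [h1 hVT, h5 hUT, h2 hVW]
    · rcases hrel with rfl | hrel
      · rcases Etr_j with ⟨h1, -, -, -, -, -⟩ | ⟨-, -, h3, -, -, -⟩ | ⟨-, h2, -, -, -, -⟩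
        exacts [h1 hVT, h3 hUT, h2 hVW]
      · obtain rfl : w = (s + c1) + 5 := idx15 (s + c1) hrel
        rw [idx55 (s + c1)] at hUT hUW
        rcases Etr_j with ⟨h1, -, -, -, -, -⟩ | ⟨-, -, -, -, -, h6⟩ | ⟨-, h2, -, -, -, -⟩
        exacts [h1 hVT, h6 hUW, h2 hVW]
  have hdisj : Disjoint (sphEdges tri W p 2) (sphEdges tri T p 2) := by
    rw [Set.disjoint_left]
    rintro e ⟨x, y, rfl, hx, hy, hxy⟩ ⟨x', y', he, hx', hy', hxy'⟩
    have hboth : (x ∈ sphVerts tri T p 2) ∧ (y ∈ sphVerts tri T p 2) := by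
      rcases (Sym2.eq_iff).1 he with ⟨h1, h2⟩ | ⟨h1, h2⟩
      · exact ⟨h1 ▸ hx', h2 ▸ hy'⟩
      · exact ⟨h1 ▸ hy', h2 ▸ hx'⟩
    obtain ⟨hxT2, hyT2⟩ := hboth
    obtain ⟨hxW, hxne, hxnadj, m, hmW, hpm, hmx⟩ := (mem_sphVerts_two hpWm).1 hx
    obtain ⟨hyW, hyne, hynadj, m', hm'W, hpm', hm'y⟩ := (mem_sphVerts_two hpWm).1 hy
    obtain ⟨i, rfl⟩ := (tri_adj_iff p m).1 hpm
    obtain ⟨t, rfl⟩ := (tri_adj_iff _ x).1 hmx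
    obtain ⟨i', rfl⟩ := (tri_adj_iff p m').1 hpm'
    obtain ⟨t', rfl⟩ := (tri_adj_iff _ y).1 hm'y
    have offadj : ∀ (u v : ℤ × ℤ), tri.Adj (p + u) (p + v) → ∃ w, u - v = dir w :=
      fun u v h => (mem_hexDirs_iff _).1 ((adj_offset p u v).1 h)
    -- extract the T-side window membership of a V-point
    have winV : ∀ z : ZMod 6, p + dir z + dir z ∈ sphVerts tri T p 2 → win s a z := by
      intro z hz
      obtain ⟨-, -, -, mm, hmmT, hpmm, hmmz⟩ := (mem_sphVerts_two hpTm).1 hz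
      obtain ⟨iT, rfl⟩ := (tri_adj_iff p mm).1 hpmm
      have := adj_to_v hmmz
      subst this
      exact (hTt _).1 hmmT
    rcases offclass i t with h0 | ⟨u, hu⟩ | ⟨k, hk⟩
    · exact hxne (by rw [add_assoc, h0, add_zero])
    · exact hxnadj (by rw [add_assoc, hu]; exact adj_add_dir p u)
    rcases offclass i' t' with h0 | ⟨u, hu⟩ | ⟨k', hk'⟩
    · exact hyne (by rw [add_assoc, h0, add_zero])
    · exact hynadj (by rw [add_assoc, hu]; exact adj_add_dir p u)
    rcases hk with ⟨hxe, hik⟩ | ⟨hxe, hik⟩ <;> rcases hk' with ⟨hye, hik'⟩ | ⟨hye, hik'⟩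
    · -- V V : impossible
      have hxp : p + dir i + dir t = p + dir k + dir k := by rw [add_assoc, hxe, ← add_assoc]
      have hyp : p + dir i' + dir t' = p + dir k' + dir k' := by
        rw [add_assoc, hye, ← add_assoc]
      rw [hxp, hyp, add_assoc p, add_assoc p] at hxy
      exact (pairclass k k').1 (offadj _ _ hxy)
    · -- x = V k, y = U k'
      subst hik
      have hxp : p + dir i + dir t = p + dir i + dir i := by rw [add_assoc, hxe, ← add_assoc]
      have hyp : p + dir i' + dir t' = p + dir k' + dir (k' + 1) := by
        rw [add_assoc, hye, ← add_assoc]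
      rw [hxp] at hxW hxT2 hxy
      rw [hyp] at hyW hyT2 hxy
      have hrel : k' = i ∨ k' + 1 = i := by
        rw [add_assoc p, add_assoc p] at hxy
        exact (pairclass i k').2.1 (offadj _ _ hxy)
      exact final i k' hrel (winV i hxT2) ((hWt i).1 hmW) ((mem_sphVerts_two hpTm).1 hxT2).1
        hxW ((mem_sphVerts_two hpTm).1 hyT2).1 hyW
    · -- x = U k, y = V k'
      subst hik'
      have hxp : p + dir i + dir t = p + dir k + dir (k + 1) := by
        rw [add_assoc, hxe, ← add_assoc]
      have hyp : p + dir i' + dir t' = p + dir i' + dir i' := by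
        rw [add_assoc, hye, ← add_assoc]
      rw [hxp] at hxW hxT2 hxy
      rw [hyp] at hyW hyT2 hxy
      have hrel : k = i' ∨ k + 1 = i' := by
        rw [add_assoc p, add_assoc p] at hxy
        exact (pairclass i' k).2.1 (offadj _ _ hxy.symm)
      exact final i' k hrel (winV i' hyT2) ((hWt i').1 hm'W)
        ((mem_sphVerts_two hpTm).1 hyT2).1 hyW ((mem_sphVerts_two hpTm).1 hxT2).1 hxW
    · -- U U : impossible
      have hxp : p + dir i + dir t = p + dir k + dir (k + 1) := by
        rw [add_assoc, hxe, ← add_assoc]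
      have hyp : p + dir i' + dir t' = p + dir k' + dir (k' + 1) := by
        rw [add_assoc, hye, ← add_assoc]
      rw [hxp, hyp, add_assoc p, add_assoc p] at hxy
      exact (pairclass k k').2.2 (offadj _ _ hxy)
  have hUnion : sphEdges tri W p 2 ∪ sphEdges tri T p 2 = ring2E p := by
    apply Set.Subset.antisymm
    · rintro e (he | he)
      exacts [extract2 W hpWm he, extract2 T hpTm he]
    · exact cover
  have hfinW : (sphEdges tri W p 2).Finite := (ring2E_finite p).subset (extract2 W hpWm)
  have hfinT : (sphEdges tri T p 2).Finite := (ring2E_finite p).subset (extract2 T hpTm)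
  have hcard := Set.ncard_union_eq hdisj hfinW hfinT
  unfold arcLen
  rw [← hcard, hUnion, ring2E_card]

end CountTwoMain

/-- hole cancellation: at a common boundary point of a smooth domain
`G` and one of its holes `W`, the sphere arc lengths add up to `6` resp. `12` and
the curvatures cancel: `K_W(p) + K_G(p) = 0`. -/
theorem hole_curvature_cancellation (T W : Set (ℤ × ℤ))
    (hT : IsSmoothDomain tri T) (hW : IsHole tri T W) :
    ∀ p ∈ boundarySet tri T ∩ boundarySet tri W,
      arcLen tri W p 1 + arcLen tri T p 1 = 6 ∧
      arcLen tri W p 2 + arcLen tri T p 2 = 12 ∧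
      curv tri W p + curv tri T p = 0 := by
  rintro p ⟨hpT, hpW⟩
  obtain ⟨s, a, ha, hTt, hWt, hintT, hintW⟩ := ring1_table hT hW hpT hpW
  have h1 := count_one hpT.1 hpW.1 s a ha hTt hWt
  have h2 := count_two hT hW hpT hpW s a ha hTt hWt hintT hintW
  refine ⟨h1, h2, ?_⟩
  unfold curv
  have e1 : (arcLen tri W p 1 : ℤ) + (arcLen tri T p 1 : ℤ) = 6 := by exact_mod_cast h1
  have e2 : (arcLen tri W p 2 : ℤ) + (arcLen tri T p 2 : ℤ) = 12 := by exact_mod_cast h2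
  linarith

end TriGB
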